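/- Let T ∈ ℤ[X]. For every integer k ≥ 1 there exist polynomials q_{k,1}, …, q_{k,k−1} ∈ ℤ[X], depending only on T and k (not on B or P), with deg(q_{k,j}) ≤ (k−j)·deg(T), such that for all polynomials B, P ∈ ℚ[X] the following identity holds: L^k(P) = S_k + Σ_{j=1}^{k−1} q_{k,j}·S_j, where L is the operator L(Q) := T·Q′ + B·Q, L^k denotes its k-fold iterate, and the polynomials S_j are defined by S_0 := P and S_{j+1} := T·S_j′ − j·T′·S_j + B·S_j. -/

import Mathlib

open Polynomial

/-- The polynomials `S_j`, defined by `S_0 = P`, `S_{j+1} = T·S_j′ − j·T′·S_j + B·S_j`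
(realizing `T^j·(d/dX + A)^j P` when `B = T·A`). -/
noncomputable def Sseq (T B P : Polynomial ℚ) : ℕ → Polynomial ℚ
  | 0 => P
  | j + 1 => T * Polynomial.derivative (Sseq T B P j)
      - (j : Polynomial ℚ) * Polynomial.derivative T * Sseq T B P j
      + B * Sseq T B P j

/-- Coefficient polynomials `q_{k,j}`. -/
noncomputable def qrec {R : Type*} [CommRing R] (T : Polynomial R) : ℕ → ℕ → Polynomial R
  | 0, 0 => 1
  | 0, _ + 1 => 0
  | _ + 1, 0 => 0
  | k + 1, j + 1 => qrec T k j
      + ((j + 1 : ℕ) : Polynomial R) * Polynomial.derivative T * qrec T k (j + 1)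
      + T * Polynomial.derivative (qrec T k (j + 1))

lemma qrec_zero_of_lt {R : Type*} [CommRing R] (T : Polynomial R) :
    ∀ k j, k < j → qrec T k j = 0 := by
  intro k
  induction k with
  | zero => intro j hj; cases j with
    | zero => omega
    | succ j => simp [qrec]
  | succ k ih =>
    intro j hj
    cases j with
    | zero => omega
    | succ j =>
      have h1 : qrec T k j = 0 := ih j (by omega)
      have h2 : qrec T k (j + 1) = 0 := ih (j + 1) (by omega)
      simp [qrec, h1, h2]

lemma qrec_self {R : Type*} [CommRing R] (T : Polynomial R) :
    ∀ k, qrec T k k = 1 := by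
  intro k
  induction k with
  | zero => simp [qrec]
  | succ k ih =>
    have h2 : qrec T k (k + 1) = 0 := qrec_zero_of_lt T k (k + 1) (by omega)
    simp [qrec, ih, h2]

lemma qrec_deriv_zero {R : Type*} [CommRing R] (T : Polynomial R) (k : ℕ) :
    Polynomial.derivative (qrec T k 0) = 0 := by
  cases k <;> simp [qrec]

lemma qrec_map (T : Polynomial ℤ) :
    ∀ k j, (qrec T k j).map (Int.castRingHom ℚ) = qrec (T.map (Int.castRingHom ℚ)) k j := by
  intro k
  induction k with
  | zero => intro j; cases j <;> simp [qrec]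
  | succ k ih =>
    intro j
    cases j with
    | zero => simp [qrec]
    | succ j =>
      simp only [qrec, Polynomial.map_add, Polynomial.map_mul, Polynomial.map_natCast,
        ← ih, Polynomial.derivative_map]

lemma qrec_deg (T : Polynomial ℤ) :
    ∀ k j, (qrec T k j).natDegree ≤ (k - j) * T.natDegree := by
  intro k
  induction k with
  | zero => intro j; cases j <;> simp [qrec]
  | succ k ih =>
    intro j
    cases j with
    | zero => simp [qrec]
    | succ j =>
      by_cases h : k < j + 1
      · have h2 : qrec T k (j + 1) = 0 := qrec_zero_of_lt T k (j + 1) h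
        have : qrec T (k + 1) (j + 1) = qrec T k j := by simp [qrec, h2]
        rw [this]
        have hkj : k - j = 0 := by omega
        have hkj' : k + 1 - (j + 1) = 0 := by omega
        have := ih j
        rw [hkj] at this
        rw [hkj']
        simpa using this
      · push_neg at h
        set d := T.natDegree with hd
        have hsub : k - j = (k - (j + 1)) + 1 := by omega
        have key : k + 1 - (j + 1) = (k - (j + 1)) + 1 := by omega
        rw [key, add_mul, one_mul]
        set m := (k - (j + 1)) * d with hm
        have b1 : (qrec T k j).natDegree ≤ m + d := by
          have := ih j; rw [hsub, add_mul, one_mul] at this; exact this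
        have b2 : (qrec T k (j + 1)).natDegree ≤ m := ih (j + 1)
        have bT' : (Polynomial.derivative T).natDegree ≤ d - 1 :=
          Polynomial.natDegree_derivative_le T
        have bq' : (Polynomial.derivative (qrec T k (j + 1))).natDegree ≤ m - 1 :=
          le_trans (Polynomial.natDegree_derivative_le _) (by omega)
        show (qrec T (k+1) (j+1)).natDegree ≤ m + d
        rw [show qrec T (k+1) (j+1) = qrec T k j
          + ((j + 1 : ℕ) : Polynomial ℤ) * Polynomial.derivative T * qrec T k (j + 1)
          + T * Polynomial.derivative (qrec T k (j + 1)) from rfl]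
        apply le_trans (Polynomial.natDegree_add_le _ _)
        apply max_le
        · apply le_trans (Polynomial.natDegree_add_le _ _)
          apply max_le b1
          apply le_trans (Polynomial.natDegree_mul_le)
          have hc : (((j + 1 : ℕ) : Polynomial ℤ)).natDegree = 0 :=
            Polynomial.natDegree_natCast _
          have hmul : ((((j + 1 : ℕ) : Polynomial ℤ)) * Polynomial.derivative T).natDegree
              ≤ d - 1 :=
            le_trans Polynomial.natDegree_mul_le (by rw [hc]; simpa using bT')
          omega
        · apply le_trans (Polynomial.natDegree_mul_le)
          omega

lemma main_identity (Tq B P : Polynomial ℚ) :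
    ∀ k, (fun Q : Polynomial ℚ => Tq * Polynomial.derivative Q + B * Q)^[k] P
      = ∑ j ∈ Finset.range (k + 1), qrec Tq k j * Sseq Tq B P j := by
  intro k
  induction k with
  | zero => simp [qrec, Sseq]
  | succ k ih =>
    rw [Function.iterate_succ_apply', ih]
    show Tq * Polynomial.derivative (∑ j ∈ Finset.range (k + 1),
          qrec Tq k j * Sseq Tq B P j)
        + B * ∑ j ∈ Finset.range (k + 1), qrec Tq k j * Sseq Tq B P j
      = ∑ j ∈ Finset.range (k + 2), qrec Tq (k + 1) j * Sseq Tq B P j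
    rw [Polynomial.derivative_sum, Finset.mul_sum, Finset.mul_sum,
      ← Finset.sum_add_distrib]
    have key : ∀ j ∈ Finset.range (k + 1),
        Tq * Polynomial.derivative (qrec Tq k j * Sseq Tq B P j)
          + B * (qrec Tq k j * Sseq Tq B P j)
        = qrec Tq k j * Sseq Tq B P (j + 1)
          + ((j : Polynomial ℚ) * Polynomial.derivative Tq * qrec Tq k j
              + Tq * Polynomial.derivative (qrec Tq k j)) * Sseq Tq B P j := by
      intro j _
      rw [show Sseq Tq B P (j + 1) = Tq * Polynomial.derivative (Sseq Tq B P j)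
        - (j : Polynomial ℚ) * Polynomial.derivative Tq * Sseq Tq B P j
        + B * Sseq Tq B P j from rfl, Polynomial.derivative_mul]
      ring
    rw [Finset.sum_congr rfl key, Finset.sum_add_distrib]
    -- abbreviation for the "g" terms
    set g : ℕ → Polynomial ℚ := fun j =>
      ((j : Polynomial ℚ) * Polynomial.derivative Tq * qrec Tq k j
        + Tq * Polynomial.derivative (qrec Tq k j)) with hg
    have hg0 : g 0 * Sseq Tq B P 0 = 0 := by
      simp [hg, qrec_deriv_zero]
    have hgtop : g (k + 1) * Sseq Tq B P (k + 1) = 0 := by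
      have := qrec_zero_of_lt Tq k (k + 1) (by omega)
      simp [hg, this]
    have shift : ∑ j ∈ Finset.range (k + 1), g j * Sseq Tq B P j
        = ∑ j ∈ Finset.range (k + 1), g (j + 1) * Sseq Tq B P (j + 1) := by
      have e1 : ∑ j ∈ Finset.range (k + 2), g j * Sseq Tq B P j
          = ∑ j ∈ Finset.range (k + 1), g j * Sseq Tq B P j := by
        rw [Finset.sum_range_succ, hgtop, add_zero]
      have e2 : ∑ j ∈ Finset.range (k + 2), g j * Sseq Tq B P j
          = (∑ j ∈ Finset.range (k + 1), g (j + 1) * Sseq Tq B P (j + 1))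
            + g 0 * Sseq Tq B P 0 := Finset.sum_range_succ' _ _
      rw [← e1, e2, hg0, add_zero]
    -- now rewrite the RHS
    rw [Finset.sum_range_succ' (fun j => qrec Tq (k + 1) j * Sseq Tq B P j) (k + 1)]
    have hzero : qrec Tq (k + 1) 0 * Sseq Tq B P 0 = 0 := by simp [qrec]
    rw [hzero, add_zero]
    have hstep : ∀ j, qrec Tq (k + 1) (j + 1) = qrec Tq k j + g (j + 1) := by
      intro j
      simp only [hg, qrec]
      push_cast
      ring
    calc
      (∑ j ∈ Finset.range (k + 1), qrec Tq k j * Sseq Tq B P (j + 1))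
          + ∑ j ∈ Finset.range (k + 1), g j * Sseq Tq B P j
        = (∑ j ∈ Finset.range (k + 1), qrec Tq k j * Sseq Tq B P (j + 1))
          + ∑ j ∈ Finset.range (k + 1), g (j + 1) * Sseq Tq B P (j + 1) := by rw [shift]
      _ = ∑ j ∈ Finset.range (k + 1),
            (qrec Tq k j + g (j + 1)) * Sseq Tq B P (j + 1) := by
          rw [← Finset.sum_add_distrib]
          exact Finset.sum_congr rfl fun j _ => by ring
      _ = ∑ j ∈ Finset.range (k + 1),
            qrec Tq (k + 1) (j + 1) * Sseq Tq B P (j + 1) := by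
          exact Finset.sum_congr rfl fun j _ => by rw [hstep]

/-- **Relationship between the two kinds of Padé polynomials** (Lemma 6.1).
For every `k ≥ 1` there exist polynomials `q_{k,1}, …, q_{k,k−1} ∈ ℤ[X]`, depending only on
`T` and `k`, with `deg(q_{k,j}) ≤ (k−j)·deg(T)`, such that for all `B, P ∈ ℚ[X]`:
`L^k(P) = S_k + Σ_{j=1}^{k−1} q_{k,j}·S_j`, where `L(Q) = T·Q′ + B·Q`. -/
theorem pade_operator_identity (T : Polynomial ℤ) (k : ℕ) (hk : 1 ≤ k) :
    ∃ q : ℕ → Polynomial ℤ,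
      (∀ j : ℕ, 1 ≤ j → j ≤ k - 1 → (q j).natDegree ≤ (k - j) * T.natDegree) ∧
      ∀ B P : Polynomial ℚ,
        (fun Q : Polynomial ℚ =>
            T.map (Int.castRingHom ℚ) * Polynomial.derivative Q + B * Q)^[k] P
          = Sseq (T.map (Int.castRingHom ℚ)) B P k
            + ∑ j ∈ Finset.Icc 1 (k - 1),
                (q j).map (Int.castRingHom ℚ) * Sseq (T.map (Int.castRingHom ℚ)) B P j := by
  refine ⟨qrec T k, fun j _ _ => qrec_deg T k j, fun B P => ?_⟩
  set Tq := T.map (Int.castRingHom ℚ) with hTq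
  rw [main_identity Tq B P k]
  have hset : Finset.range (k + 1) = insert 0 (insert k (Finset.Icc 1 (k - 1))) := by
    ext x
    simp only [Finset.mem_range, Finset.mem_insert, Finset.mem_Icc]
    omega
  rw [hset, Finset.sum_insert, Finset.sum_insert]
  · have h0 : qrec Tq k 0 = 0 := by
      cases k with
      | zero => omega
      | succ k => simp [qrec]
    rw [h0, zero_mul, zero_add, qrec_self, one_mul]
    congr 1
    exact Finset.sum_congr rfl fun j hj => by
      rw [qrec_map]
  · simp only [Finset.mem_Icc]; omega
  · simp only [Finset.mem_insert, Finset.mem_Icc]; omega
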